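/- Let A and B be lattices with least elements. The map ⊠ : A × B → A ⊠ B, ⟨a,b⟩ ↦ a ⊠ b, is a universal {0}-lattice bimorphism: for every lattice C with least element and every {0}-lattice bimorphism f : A × B → C, there exists a unique {∨,0}-homomorphism g : A ⊠ B → C such that g(a ⊠ b) = f(⟨a,b⟩) for all a ∈ A and b ∈ B. -/
import Mathlib


/-- The pure box `a □ b = {⟨x,y⟩ : x ≤ a or y ≤ b}`. -/
def pureBox {A B : Type*} [Lattice A] [Lattice B] (a : A) (b : B) : Set (A × B) :=
  {p : A × B | p.1 ≤ a ∨ p.2 ≤ b}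

/-- `a ∘ b = {⟨x,y⟩ : x ≤ a and y ≤ b}`. -/
def pureCirc {A B : Type*} [Lattice A] [Lattice B] (a : A) (b : B) : Set (A × B) :=
  {p : A × B | p.1 ≤ a ∧ p.2 ≤ b}

/-- The box product `A □ B`: all finite (nonempty) intersections of pure boxes. -/
def BoxProd (A B : Type*) [Lattice A] [Lattice B] : Set (Set (A × B)) :=
  {H | ∃ (n : ℕ) (a : Fin (n + 1) → A) (b : Fin (n + 1) → B),
    H = ⋂ i, pureBox (a i) (b i)}

/-- `A ⊡ B`: all finite unions of pure boxes (at least one) and pure circles. -/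
def BoxDot (A B : Type*) [Lattice A] [Lattice B] : Set (Set (A × B)) :=
  {H | ∃ (m n : ℕ) (a : Fin (m + 1) → A) (b : Fin (m + 1) → B)
      (c : Fin n → A) (d : Fin n → B),
    H = (⋃ i, pureBox (a i) (b i)) ∪ ⋃ j, pureCirc (c j) (d j)}

/-- The box closure of a subset of `A × B`: intersection of all pure boxes containing it. -/
def BoxCl {A B : Type*} [Lattice A] [Lattice B] (X : Set (A × B)) : Set (A × B) :=
  ⋂ (a : A) (b : B) (_ : X ⊆ pureBox a b), pureBox a b

/-- The pure lattice tensor `a ⊠ b = (a ∘ b) ∪ ⊥_{A,B}`, where `⊥_{A,B}` consists of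
the pairs one of whose coordinates is a least element. -/
def pureTens {A B : Type*} [Lattice A] [Lattice B] (a : A) (b : B) : Set (A × B) :=
  pureCirc a b ∪ {p : A × B | IsBot p.1 ∨ IsBot p.2}

/-- A subset of `A × B` is confined if it is contained in some pure lattice tensor. -/
def Confined {A B : Type*} [Lattice A] [Lattice B] (X : Set (A × B)) : Prop :=
  ∃ (a : A) (b : B), X ⊆ pureTens a b

/-- The lattice tensor product `A ⊠ B`: all confined elements of `A □ B`. -/
def LatTens (A B : Type*) [Lattice A] [Lattice B] : Set (Set (A × B)) :=
  {H | H ∈ BoxProd A B ∧ Confined H}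

/-- `X^△ = {⟨a,b⟩ : ⟨x,y⟩ ◁ ⟨a,b⟩ for all ⟨x,y⟩ ∈ X}` where `⟨x,y⟩ ◁ ⟨a,b⟩` iff
`x ≤ a` or `y ≤ b`. -/
def trUp {A B : Type*} [Lattice A] [Lattice B] (X : Set (A × B)) : Set (A × B) :=
  {p : A × B | ∀ q ∈ X, q.1 ≤ p.1 ∨ q.2 ≤ p.2}

/-- `X^▽ = {⟨a,b⟩ : ⟨a,b⟩ ◁ ⟨x,y⟩ for all ⟨x,y⟩ ∈ X}`. -/
def trDown {A B : Type*} [Lattice A] [Lattice B] (X : Set (A × B)) : Set (A × B) :=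
  {p : A × B | ∀ q ∈ X, p.1 ≤ q.1 ∨ p.2 ≤ q.2}

/-- `F_D(n)`: the upper subsets `𝔠` of the powerset of `n` with `∅ ∉ 𝔠` and `n ∈ 𝔠`. -/
def FD (n : ℕ) : Set (Finset (Finset (Fin n))) :=
  {c | (∀ X ∈ c, ∀ Y : Finset (Fin n), X ⊆ Y → Y ∈ c) ∧ ∅ ∉ c ∧ Finset.univ ∈ c}

/-- `𝔠* = {X ⊆ n : n − X ∉ 𝔠}`. -/
def cstar {n : ℕ} (c : Finset (Finset (Fin n))) : Finset (Finset (Fin n)) :=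
  Finset.univ.filter fun X => Xᶜ ∉ c

/-- The lattice polynomial `P_𝔠(x) = ⋀_{X ∈ 𝔠} ⋁_{i ∈ X} x_i` (with value `⊥` in the
irrelevant case `𝔠 = ∅`). -/
def Pc {L : Type*} [Lattice L] [OrderBot L] {n : ℕ}
    (c : Finset (Finset (Fin n))) (x : Fin n → L) : L :=
  if h : c.Nonempty then c.inf' h fun X => X.sup x else ⊥

/-- A `{0}`-lattice bimorphism from `A × B` to `C`. -/
def IsZeroLatBimorphism {A B C : Type*} [Lattice A] [OrderBot A] [Lattice B] [OrderBot B]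
    [Lattice C] [OrderBot C] (f : A × B → C) : Prop :=
  (∀ a : A, f (a, ⊥) = ⊥) ∧ (∀ b : B, f (⊥, b) = ⊥) ∧
  (∀ (a₀ a₁ : A) (b : B), f (a₀ ⊔ a₁, b) = f (a₀, b) ⊔ f (a₁, b)) ∧
  (∀ (a : A) (b₀ b₁ : B), f (a, b₀ ⊔ b₁) = f (a, b₀) ⊔ f (a, b₁)) ∧
  ∀ (n : ℕ) (a : Fin (n + 1) → A) (b : Fin (n + 1) → B), ∀ c ∈ FD (n + 1),
    f (Pc c a, Pc (cstar c) b) ≤ Finset.univ.sup fun i => f (a i, b i)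

section Aux
set_option linter.unusedSectionVars false

open Finset Set

variable {A B : Type*} [Lattice A] [OrderBot A] [Lattice B] [OrderBot B]

lemma botset_subset_pureBox (a : A) (b : B) :
    {p : A × B | IsBot p.1 ∨ IsBot p.2} ⊆ pureBox a b := by
  rintro p (h | h)
  · exact Or.inl (h a)
  · exact Or.inr (h b)

lemma pureTens_eq_inter (a : A) (b : B) :
    pureTens a b = pureBox a ⊥ ∩ pureBox ⊥ b := by
  ext ⟨x, y⟩
  simp only [pureTens, pureCirc, pureBox, Set.mem_union, Set.mem_setOf_eq, Set.mem_inter_iff,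
    isBot_iff_eq_bot, le_bot_iff]
  constructor
  · rintro (⟨h1, h2⟩ | h | h)
    · exact ⟨Or.inl h1, Or.inr h2⟩
    · exact ⟨Or.inl (h ▸ bot_le), Or.inl h⟩
    · exact ⟨Or.inr h, Or.inr (h ▸ bot_le)⟩
  · rintro ⟨h1 | h1, h2 | h2⟩
    · exact Or.inr (Or.inl h2)
    · exact Or.inl ⟨h1, h2⟩
    · exact Or.inr (Or.inr h1)
    · exact Or.inr (Or.inr h1)

lemma pureTens_subset_pureBox {a : A} {b : B} {u : A} {v : B} :
    pureTens a b ⊆ pureBox u v ↔ a ≤ u ∨ b ≤ v := by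
  constructor
  · intro h
    exact h (show (a,b) ∈ pureTens a b from Or.inl ⟨le_refl a, le_refl b⟩)
  · rintro (h | h) p hp
    · rcases hp with ⟨h1, _⟩ | hb | hb
      · exact Or.inl (h1.trans h)
      · exact Or.inl (hb u)
      · exact Or.inr (hb v)
    · rcases hp with ⟨_, h2⟩ | hb | hb
      · exact Or.inr (h2.trans h)
      · exact Or.inl (hb u)
      · exact Or.inr (hb v)

lemma pureTens_mono {a a' : A} {b b' : B} (ha : a ≤ a') (hb : b ≤ b') :
    pureTens a b ⊆ pureTens a' b' := by
  rintro p (⟨h1, h2⟩ | h)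
  · exact Or.inl ⟨h1.trans ha, h2.trans hb⟩
  · exact Or.inr h

lemma subset_BoxCl (X : Set (A × B)) : X ⊆ BoxCl X := by
  intro p hp
  simp only [BoxCl, Set.mem_iInter]
  exact fun a b h => h hp

lemma BoxCl_subset {X : Set (A × B)} {a : A} {b : B} (h : X ⊆ pureBox a b) :
    BoxCl X ⊆ pureBox a b := fun p hp => by
  simp only [BoxCl, Set.mem_iInter] at hp
  exact hp a b h

lemma BoxCl_mono {X Y : Set (A × B)} (h : X ⊆ Y) : BoxCl X ⊆ BoxCl Y := by
  intro p hp
  simp only [BoxCl, Set.mem_iInter] at hp ⊢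
  exact fun a b hY => hp a b (h.trans hY)

lemma BoxCl_eq_self_of_mem_BoxProd {H : Set (A × B)} (h : H ∈ BoxProd A B) :
    BoxCl H = H := by
  obtain ⟨n, a, b, rfl⟩ := h
  refine Set.Subset.antisymm ?_ (subset_BoxCl _)
  intro p hp
  refine Set.mem_iInter.2 fun i => ?_
  have hs : (⋂ j, pureBox (a j) (b j)) ⊆ pureBox (a i) (b i) := Set.iInter_subset _ i
  exact BoxCl_subset hs hp

lemma BoxCl_union_BoxCl_left (X Y : Set (A × B)) :
    BoxCl (BoxCl X ∪ Y) = BoxCl (X ∪ Y) := by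
  refine Set.Subset.antisymm ?_ (BoxCl_mono (Set.union_subset_union_left _ (subset_BoxCl X)))
  intro p hp
  simp only [BoxCl, Set.mem_iInter] at hp ⊢
  intro a b hab
  exact hp a b (Set.union_subset ((BoxCl_subset (subset_trans Set.subset_union_left hab)))
    (subset_trans Set.subset_union_right hab))

end Aux
section Aux2
set_option linter.unusedSectionVars false
set_option maxHeartbeats 1000000

variable {A B : Type*} [Lattice A] [OrderBot A] [Lattice B] [OrderBot B]

/-- Any nonempty finite type surjects from some `Fin (m+1)`. -/
lemma exists_fin_surj (ι : Type*) [Fintype ι] [Nonempty ι] :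
    ∃ (m : ℕ) (t : Fin (m + 1) → ι), Function.Surjective t := by
  have hpos : 0 < Fintype.card ι := Fintype.card_pos
  obtain ⟨m, hm⟩ : ∃ m, Fintype.card ι = m + 1 :=
    ⟨Fintype.card ι - 1, (Nat.succ_pred_eq_of_pos hpos).symm⟩
  refine ⟨m, fun j => (Fintype.equivFin ι).symm (Fin.cast hm.symm j), fun x => ?_⟩
  refine ⟨Fin.cast hm ((Fintype.equivFin ι) x), ?_⟩
  simp

lemma pureTens_mem_LatTens (a : A) (b : B) : pureTens a b ∈ LatTens A B := by
  constructor
  · refine ⟨1, ![a, ⊥], ![⊥, b], ?_⟩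
    rw [pureTens_eq_inter]
    ext p
    simp [Fin.forall_fin_two]
  · exact ⟨a, b, subset_rfl⟩

lemma mem_BoxCl_iUnion_tens {m : ℕ} {c : Fin (m + 1) → A} {d : Fin (m + 1) → B}
    {p : A × B} :
    p ∈ BoxCl (⋃ i, pureTens (c i) (d i)) ↔
      ∀ u v, (∀ i, c i ≤ u ∨ d i ≤ v) → (p.1 ≤ u ∨ p.2 ≤ v) := by
  simp only [BoxCl, Set.mem_iInter, Set.iUnion_subset_iff, pureTens_subset_pureBox]
  constructor
  · intro h u v huv
    exact h u v huv
  · intro h u v huv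
    exact h u v huv

lemma BoxCl_iUnion_tens_eq {m : ℕ} (c : Fin (m + 1) → A) (d : Fin (m + 1) → B) :
    BoxCl (⋃ i, pureTens (c i) (d i)) =
      ⋂ X : Finset (Fin (m + 1)), pureBox (X.sup c) (Xᶜ.sup d) := by
  classical
  apply Set.Subset.antisymm
  · refine Set.subset_iInter fun X => ?_
    refine BoxCl_subset ?_
    refine Set.iUnion_subset fun i => ?_
    rw [pureTens_subset_pureBox]
    by_cases hi : i ∈ X
    · exact Or.inl (Finset.le_sup hi)
    · exact Or.inr (Finset.le_sup (Finset.mem_compl.2 hi))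
  · intro p hp
    rw [mem_BoxCl_iUnion_tens]
    intro u v huv
    have hpX := Set.mem_iInter.1 hp (Finset.univ.filter fun i => c i ≤ u)
    rcases hpX with h1 | h2
    · refine Or.inl (h1.trans ?_)
      exact Finset.sup_le fun i hi => (Finset.mem_filter.1 hi).2
    · refine Or.inr (h2.trans ?_)
      refine Finset.sup_le fun i hi => ?_
      have : ¬ c i ≤ u := by
        have := Finset.mem_compl.1 hi
        simpa using this
      exact (huv i).resolve_left this

lemma BoxCl_iUnion_tens_mem_LatTens {m : ℕ} (c : Fin (m + 1) → A) (d : Fin (m + 1) → B) :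
    BoxCl (⋃ i, pureTens (c i) (d i)) ∈ LatTens A B := by
  classical
  constructor
  · rw [BoxCl_iUnion_tens_eq]
    obtain ⟨q, t, ht⟩ := exists_fin_surj (Finset (Fin (m + 1)))
    refine ⟨q, fun j => (t j).sup c, fun j => ((t j)ᶜ).sup d, ?_⟩
    exact (ht.iInter_comp fun X => pureBox (X.sup c) (Xᶜ.sup d)).symm
  · refine ⟨Finset.univ.sup c, Finset.univ.sup d, ?_⟩
    rw [pureTens_eq_inter]
    refine Set.subset_inter (BoxCl_subset ?_) (BoxCl_subset ?_) <;>
      refine Set.iUnion_subset fun i => ?_ <;> rw [pureTens_subset_pureBox]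
    · exact Or.inl (Finset.le_sup (Finset.mem_univ i))
    · exact Or.inr (Finset.le_sup (Finset.mem_univ i))

end Aux2
section Aux3
set_option linter.unusedSectionVars false
set_option maxHeartbeats 1000000

variable {A B : Type*} [Lattice A] [OrderBot A] [Lattice B] [OrderBot B]

lemma exists_rep_of_mem_LatTens {H : Set (A × B)} (h : H ∈ LatTens A B) :
    ∃ (m : ℕ) (c : Fin (m + 1) → A) (d : Fin (m + 1) → B),
      H = ⋃ i, pureTens (c i) (d i) := by
  classical
  obtain ⟨⟨n, a, b, rfl⟩, a₀, b₀, hconf⟩ := h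
  set ι := Option (Option (Fin (n + 1))) with hι
  set a' : ι → A := fun i => Option.elim i a₀ (fun j => Option.elim j ⊥ a) with ha'
  set b' : ι → B := fun i => Option.elim i ⊥ (fun j => Option.elim j b₀ b) with hb'
  have hH : (⋂ i, pureBox (a i) (b i)) = ⋂ i : ι, pureBox (a' i) (b' i) := by
    apply Set.Subset.antisymm
    · intro p hp
      have hpt : p ∈ pureBox a₀ ⊥ ∩ pureBox (⊥ : A) b₀ := by
        rw [← pureTens_eq_inter]; exact hconf hp
      refine Set.mem_iInter.2 fun i => ?_
      match i with
      | none => exact hpt.1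
      | some none => exact hpt.2
      | some (some j) => exact Set.mem_iInter.1 hp j
    · intro p hp
      exact Set.mem_iInter.2 fun j => Set.mem_iInter.1 hp (some (some j))
  set c' : Finset ι → A := fun X => if hX : X.Nonempty then X.inf' hX a' else ⊥ with hc'
  set d' : Finset ι → B := fun X => if hX : Xᶜ.Nonempty then Xᶜ.inf' hX b' else ⊥ with hd'
  have key : (⋂ i : ι, pureBox (a' i) (b' i)) = ⋃ X : Finset ι, pureTens (c' X) (d' X) := by
    apply Set.Subset.antisymm
    · intro p hp
      by_cases h1 : IsBot p.1
      · exact Set.mem_iUnion.2 ⟨∅, Or.inr (Or.inl h1)⟩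
      by_cases h2 : IsBot p.2
      · exact Set.mem_iUnion.2 ⟨∅, Or.inr (Or.inr h2)⟩
      set X : Finset ι := Finset.univ.filter (fun i => p.1 ≤ a' i) with hX
      have hXmem : ∀ i : ι, i ∈ X ↔ p.1 ≤ a' i := by
        intro i; simp [hX]
      have hXne : X.Nonempty := by
        refine ⟨none, (hXmem none).2 ?_⟩
        have := Set.mem_iInter.1 hp none
        rcases this with h | h
        · exact h
        · exact absurd (fun y => le_trans h bot_le) h2
      have hXcne : Xᶜ.Nonempty := by
        refine ⟨some none, Finset.mem_compl.2 ?_⟩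
        rw [hXmem]
        intro hle
        exact h1 fun y => le_trans hle bot_le
      refine Set.mem_iUnion.2 ⟨X, Or.inl ⟨?_, ?_⟩⟩
      · simp only [hc']
        rw [dif_pos hXne]
        exact Finset.le_inf' _ _ fun i hi => (hXmem i).1 hi
      · simp only [hd']
        rw [dif_pos hXcne]
        refine Finset.le_inf' _ _ fun i hi => ?_
        have hni : ¬ p.1 ≤ a' i := fun hle => (Finset.mem_compl.1 hi) ((hXmem i).2 hle)
        exact (Set.mem_iInter.1 hp i).resolve_left hni
    · refine Set.iUnion_subset fun X => ?_
      rintro p (⟨h1, h2⟩ | hb)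
      · refine Set.mem_iInter.2 fun i => ?_
        by_cases hi : i ∈ X
        · have hXne : X.Nonempty := ⟨i, hi⟩
          refine Or.inl (le_trans h1 ?_)
          simp only [hc']
          rw [dif_pos hXne]
          exact Finset.inf'_le _ hi
        · have hic : i ∈ Xᶜ := Finset.mem_compl.2 hi
          have hXcne : Xᶜ.Nonempty := ⟨i, hic⟩
          refine Or.inr (le_trans h2 ?_)
          simp only [hd']
          rw [dif_pos hXcne]
          exact Finset.inf'_le _ hic
      · exact Set.mem_iInter.2 fun i => botset_subset_pureBox _ _ hb
  obtain ⟨m, t, ht⟩ := exists_fin_surj (Finset ι)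
  refine ⟨m, c' ∘ t, d' ∘ t, ?_⟩
  rw [hH, key]
  exact (ht.iUnion_comp fun X => pureTens (c' X) (d' X)).symm

end Aux3
section Aux4
set_option linter.unusedSectionVars false
set_option maxHeartbeats 1000000

variable {A B C : Type*} [Lattice A] [OrderBot A] [Lattice B] [OrderBot B]
  [Lattice C] [OrderBot C] {f : A × B → C}

lemma f_mono (hf : IsZeroLatBimorphism f) {a a' : A} {b b' : B}
    (ha : a ≤ a') (hb : b ≤ b') : f (a, b) ≤ f (a', b') := by
  have h1 : f (a, b') ≤ f (a', b') := by
    have h := hf.2.2.1 a a' b'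
    rw [sup_eq_right.2 ha] at h
    rw [h]
    exact le_sup_left
  have h2 : f (a, b) ≤ f (a, b') := by
    have h := hf.2.2.2.1 a b b'
    rw [sup_eq_right.2 hb] at h
    rw [h]
    exact le_sup_left
  exact h2.trans h1

lemma f_le_sup_of_mem_iUnion_tens (hf : IsZeroLatBimorphism f) {m : ℕ}
    {c : Fin (m + 1) → A} {d : Fin (m + 1) → B} {p : A × B}
    (hp : p ∈ ⋃ i, pureTens (c i) (d i)) :
    f p ≤ Finset.univ.sup fun i => f (c i, d i) := by
  obtain ⟨i, hi⟩ := Set.mem_iUnion.1 hp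
  have hfp : f p = f (p.1, p.2) := rfl
  rcases hi with ⟨h1, h2⟩ | hb | hb
  · rw [hfp]
    exact le_trans (f_mono hf h1 h2) (Finset.le_sup (f := fun i => f (c i, d i)) (Finset.mem_univ i))
  · rw [hfp, isBot_iff_eq_bot.1 hb, hf.2.1 p.2]
    exact bot_le
  · rw [hfp, isBot_iff_eq_bot.1 hb, hf.1 p.1]
    exact bot_le

lemma f_le_sup_of_mem_BoxCl (hf : IsZeroLatBimorphism f) {m : ℕ}
    {c : Fin (m + 1) → A} {d : Fin (m + 1) → B} {p : A × B}
    (hp : p ∈ BoxCl (⋃ i, pureTens (c i) (d i))) :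
    f p ≤ Finset.univ.sup fun i => f (c i, d i) := by
  classical
  rw [mem_BoxCl_iUnion_tens] at hp
  by_cases h1 : p.1 = ⊥
  · have : f p = f (⊥, p.2) := by rw [← h1]
    rw [this, hf.2.1 p.2]; exact bot_le
  by_cases h2 : p.2 = ⊥
  · have : f p = f (p.1, ⊥) := by rw [← h2]
    rw [this, hf.1 p.1]; exact bot_le
  set 𝔠 : Finset (Finset (Fin (m + 1))) :=
    Finset.univ.filter (fun X => p.1 ≤ X.sup c) with h𝔠
  have hmem𝔠 : ∀ X, X ∈ 𝔠 ↔ p.1 ≤ X.sup c := by intro X; simp [h𝔠]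
  have huniv : Finset.univ ∈ 𝔠 := by
    rw [hmem𝔠]
    refine (hp (Finset.univ.sup c) ⊥ fun i => Or.inl (Finset.le_sup (Finset.mem_univ i))).resolve_right ?_
    intro h
    exact h2 (le_bot_iff.1 h)
  have hFD : 𝔠 ∈ FD (m + 1) := by
    refine ⟨fun X hX Y hXY => ?_, fun hemp => ?_, huniv⟩
    · rw [hmem𝔠] at hX ⊢
      exact hX.trans (Finset.sup_mono hXY)
    · rw [hmem𝔠, Finset.sup_empty] at hemp
      exact h1 (le_bot_iff.1 hemp)
  have hne : 𝔠.Nonempty := ⟨Finset.univ, huniv⟩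
  have hstarne : (cstar 𝔠).Nonempty := by
    refine ⟨Finset.univ, Finset.mem_filter.2 ⟨Finset.mem_univ _, ?_⟩⟩
    rw [Finset.compl_univ]
    exact hFD.2.1
  have hPc1 : p.1 ≤ Pc 𝔠 c := by
    rw [Pc, dif_pos hne]
    exact Finset.le_inf' _ _ fun X hX => (hmem𝔠 X).1 hX
  have hPc2 : p.2 ≤ Pc (cstar 𝔠) d := by
    rw [Pc, dif_pos hstarne]
    refine Finset.le_inf' _ _ fun X hX => ?_
    have hXc : ¬ p.1 ≤ Xᶜ.sup c := by
      have := (Finset.mem_filter.1 hX).2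
      rw [hmem𝔠] at this
      exact this
    refine (hp (Xᶜ.sup c) (X.sup d) fun i => ?_).resolve_left hXc
    by_cases hi : i ∈ X
    · exact Or.inr (Finset.le_sup hi)
    · exact Or.inl (Finset.le_sup (Finset.mem_compl.2 hi))
  calc f p = f (p.1, p.2) := rfl
    _ ≤ f (Pc 𝔠 c, Pc (cstar 𝔠) d) := f_mono hf hPc1 hPc2
    _ ≤ _ := hf.2.2.2.2 m c d 𝔠 hFD

lemma sup_eq_of_iUnion_tens_eq (hf : IsZeroLatBimorphism f) {m m' : ℕ}
    {c : Fin (m + 1) → A} {d : Fin (m + 1) → B}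
    {c' : Fin (m' + 1) → A} {d' : Fin (m' + 1) → B}
    (h : (⋃ i, pureTens (c i) (d i)) = ⋃ j, pureTens (c' j) (d' j)) :
    (Finset.univ.sup fun i => f (c i, d i)) = Finset.univ.sup fun j => f (c' j, d' j) := by
  apply le_antisymm
  · refine Finset.sup_le fun i _ => ?_
    refine f_le_sup_of_mem_iUnion_tens hf (h ▸ ?_)
    exact Set.mem_iUnion.2 ⟨i, Or.inl ⟨le_refl _, le_refl _⟩⟩
  · refine Finset.sup_le fun j _ => ?_
    refine f_le_sup_of_mem_iUnion_tens hf (h.symm ▸ ?_)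
    exact Set.mem_iUnion.2 ⟨j, Or.inl ⟨le_refl _, le_refl _⟩⟩

end Aux4

open Classical in
/-- The value of the factoring homomorphism, defined by choice from a representation
as a finite union of pure tensors. -/
noncomputable def gVal {A B C : Type*} [Lattice A] [OrderBot A] [Lattice B] [OrderBot B]
    [Lattice C] [OrderBot C] (f : A × B → C) (H : Set (A × B)) : C :=
  if h : ∃ (m : ℕ) (c : Fin (m + 1) → A) (d : Fin (m + 1) → B),
      H = ⋃ i, pureTens (c i) (d i) then
    Finset.univ.sup fun i => f (h.choose_spec.choose i, h.choose_spec.choose_spec.choose i)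
  else ⊥

section Aux5
set_option linter.unusedSectionVars false
set_option maxHeartbeats 1000000

variable {A B C : Type*} [Lattice A] [OrderBot A] [Lattice B] [OrderBot B]
  [Lattice C] [OrderBot C] {f : A × B → C}

lemma gVal_eq (hf : IsZeroLatBimorphism f) {H : Set (A × B)} {m : ℕ}
    {c : Fin (m + 1) → A} {d : Fin (m + 1) → B}
    (hrep : H = ⋃ i, pureTens (c i) (d i)) :
    gVal f H = Finset.univ.sup fun i => f (c i, d i) := by
  have hex : ∃ (m : ℕ) (c : Fin (m + 1) → A) (d : Fin (m + 1) → B),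
      H = ⋃ i, pureTens (c i) (d i) := ⟨m, c, d, hrep⟩
  rw [gVal, dif_pos hex]
  exact sup_eq_of_iUnion_tens_eq hf
    (hex.choose_spec.choose_spec.choose_spec.symm.trans hrep)

end Aux5
section Aux6
set_option linter.unusedSectionVars false
set_option maxHeartbeats 1000000

variable {C : Type*} [Lattice C] [OrderBot C]

lemma sup_univ_add {m n : ℕ} (F : Fin (m + n) → C) :
    Finset.univ.sup F =
      (Finset.univ.sup fun j : Fin m => F (Fin.castAdd n j)) ⊔
        Finset.univ.sup fun j : Fin n => F (Fin.natAdd m j) := by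
  apply le_antisymm
  · refine Finset.sup_le fun i _ => ?_
    refine Fin.addCases (motive := fun i => F i ≤ _) (fun j => ?_) (fun j => ?_) i
    · exact le_trans (Finset.le_sup (f := fun j : Fin m => F (Fin.castAdd n j))
        (Finset.mem_univ j)) le_sup_left
    · exact le_trans (Finset.le_sup (f := fun j : Fin n => F (Fin.natAdd m j))
        (Finset.mem_univ j)) le_sup_right
  · refine sup_le (Finset.sup_le fun j _ => ?_) (Finset.sup_le fun j _ => ?_)
    · exact Finset.le_sup (f := F) (Finset.mem_univ (Fin.castAdd n j))
    · exact Finset.le_sup (f := F) (Finset.mem_univ (Fin.natAdd m j))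

lemma sup_univ_castSucc' {n : ℕ} (F : Fin (n + 1) → C) :
    Finset.univ.sup F =
      (Finset.univ.sup fun j : Fin n => F j.castSucc) ⊔ F (Fin.last n) := by
  apply le_antisymm
  · refine Finset.sup_le fun i _ => ?_
    refine Fin.lastCases (motive := fun i => F i ≤ _) ?_ (fun j => ?_) i
    · exact le_sup_right
    · exact le_trans (Finset.le_sup (f := fun j : Fin n => F j.castSucc)
        (Finset.mem_univ j)) le_sup_left
  · refine sup_le (Finset.sup_le fun j _ => ?_) ?_
    · exact Finset.le_sup (f := F) (Finset.mem_univ j.castSucc)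
    · exact Finset.le_sup (f := F) (Finset.mem_univ (Fin.last n))

lemma iUnion_add_eq {X : Type*} {m n : ℕ} (S : Fin (m + n) → Set X) :
    (⋃ i, S i) = (⋃ j : Fin m, S (Fin.castAdd n j)) ∪ ⋃ j : Fin n, S (Fin.natAdd m j) := by
  ext p
  simp only [Set.mem_iUnion, Set.mem_union]
  constructor
  · rintro ⟨i, hi⟩
    revert hi
    refine Fin.addCases (motive := fun i => p ∈ S i → _) (fun j hj => Or.inl ⟨j, hj⟩)
      (fun j hj => Or.inr ⟨j, hj⟩) i
  · rintro (⟨j, hj⟩ | ⟨j, hj⟩)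
    exacts [⟨_, hj⟩, ⟨_, hj⟩]

lemma iUnion_castSucc_eq {X : Type*} {n : ℕ} (S : Fin (n + 1) → Set X) :
    (⋃ i, S i) = (⋃ j : Fin n, S j.castSucc) ∪ S (Fin.last n) := by
  ext p
  simp only [Set.mem_iUnion, Set.mem_union]
  constructor
  · rintro ⟨i, hi⟩
    revert hi
    refine Fin.lastCases (motive := fun i => p ∈ S i → _) (fun hj => Or.inr hj)
      (fun j hj => Or.inl ⟨j, hj⟩) i
  · rintro (⟨j, hj⟩ | hj)
    exacts [⟨_, hj⟩, ⟨_, hj⟩]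

end Aux6

section Aux7
set_option linter.unusedSectionVars false
set_option maxHeartbeats 1000000

variable {A B C : Type*} [Lattice A] [OrderBot A] [Lattice B] [OrderBot B]
  [Lattice C] [OrderBot C] {f : A × B → C}

/-- Any map satisfying the join rule and the pure-tensor values computes the value of
the `BoxCl` of a finite union of pure tensors as the sup of the `f`-values. -/
lemma g'_BoxCl_iUnion (g' : Set (A × B) → C)
    (hjoin : ∀ H ∈ LatTens A B, ∀ K ∈ LatTens A B, g' (BoxCl (H ∪ K)) = g' H ⊔ g' K)
    (hpt : ∀ (a : A) (b : B), g' (pureTens a b) = f (a, b)) :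
    ∀ (m : ℕ) (c : Fin (m + 1) → A) (d : Fin (m + 1) → B),
      g' (BoxCl (⋃ i, pureTens (c i) (d i))) = Finset.univ.sup fun i => f (c i, d i) := by
  intro m
  induction m with
  | zero =>
    intro c d
    have h0 : (⋃ i : Fin 1, pureTens (c i) (d i)) = pureTens (c 0) (d 0) := by
      apply Set.Subset.antisymm
      · refine Set.iUnion_subset fun i => ?_
        rw [Fin.fin_one_eq_zero i]
      · exact fun p hp => Set.mem_iUnion.2 ⟨0, hp⟩
    rw [h0, BoxCl_eq_self_of_mem_BoxProd (pureTens_mem_LatTens (c 0) (d 0)).1, hpt]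
    apply le_antisymm
    · exact Finset.le_sup (f := fun i => f (c i, d i)) (Finset.mem_univ 0)
    · refine Finset.sup_le fun i _ => ?_
      rw [Fin.fin_one_eq_zero i]
  | succ k ih =>
    intro c d
    have hsplit := iUnion_castSucc_eq (fun i => pureTens (c i) (d i))
    rw [hsplit, ← BoxCl_union_BoxCl_left,
      hjoin _ (BoxCl_iUnion_tens_mem_LatTens _ _) _ (pureTens_mem_LatTens _ _),
      ih (fun j => c j.castSucc) (fun j => d j.castSucc), hpt]
    exact (sup_univ_castSucc' (fun i => f (c i, d i))).symm

end Aux7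
section Aux8
set_option linter.unusedSectionVars false
set_option maxHeartbeats 1000000

variable {A B C : Type*} [Lattice A] [OrderBot A] [Lattice B] [OrderBot B]
  [Lattice C] [OrderBot C] {f : A × B → C}

lemma gVal_join (hf : IsZeroLatBimorphism f) {H K : Set (A × B)}
    (hH : H ∈ LatTens A B) (hK : K ∈ LatTens A B) :
    gVal f (BoxCl (H ∪ K)) = gVal f H ⊔ gVal f K := by
  classical
  obtain ⟨m, c, d, hHrep⟩ := exists_rep_of_mem_LatTens hH
  obtain ⟨m', c', d', hKrep⟩ := exists_rep_of_mem_LatTens hK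
  have hHK : H ∪ K = ⋃ i : Fin (m + 1 + (m' + 1)),
      pureTens (Fin.append c c' i) (Fin.append d d' i) := by
    have hsplit := iUnion_add_eq (m := m + 1) (n := m' + 1)
      (fun i => pureTens (Fin.append c c' i) (Fin.append d d' i))
    simp only [Fin.append_left, Fin.append_right] at hsplit
    rw [hHrep, hKrep, ← hsplit]
  have hWmem : BoxCl (H ∪ K) ∈ LatTens A B := by
    rw [hHK]
    exact BoxCl_iUnion_tens_mem_LatTens (m := m + 1 + m')
      (Fin.append c c' : Fin (m + 1 + (m' + 1)) → A) (Fin.append d d' : Fin (m + 1 + (m' + 1)) → B)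
  obtain ⟨w, e, e', hWrep⟩ := exists_rep_of_mem_LatTens hWmem
  rw [gVal_eq hf hWrep, gVal_eq hf hHrep, gVal_eq hf hKrep]
  have hsupeq : (Finset.univ.sup fun l => f (e l, e' l)) =
      Finset.univ.sup fun i : Fin (m + 1 + (m' + 1)) =>
        f (Fin.append c c' i, Fin.append d d' i) := by
    apply le_antisymm
    · refine Finset.sup_le fun l _ => ?_
      refine f_le_sup_of_mem_BoxCl hf (m := m + 1 + m')
        (c := (Fin.append c c' : Fin (m + 1 + (m' + 1)) → A))
        (d := (Fin.append d d' : Fin (m + 1 + (m' + 1)) → B)) ?_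
      have hmem : (e l, e' l) ∈ BoxCl (H ∪ K) :=
        hWrep ▸ Set.mem_iUnion.2 ⟨l, Or.inl ⟨le_refl _, le_refl _⟩⟩
      rw [hHK] at hmem
      exact hmem
    · refine Finset.sup_le fun i _ => ?_
      refine f_le_sup_of_mem_iUnion_tens hf (c := e) (d := e') ?_
      have hmem : (Fin.append c c' i, Fin.append d d' i) ∈ H ∪ K :=
        hHK ▸ Set.mem_iUnion.2 ⟨i, Or.inl ⟨le_refl _, le_refl _⟩⟩
      have hmem2 := subset_BoxCl (H ∪ K) hmem
      rw [hWrep] at hmem2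
      exact hmem2
  rw [hsupeq]
  have hadd := sup_univ_add (m := m + 1) (n := m' + 1)
    (fun i => f (Fin.append c c' i, Fin.append d d' i))
  simp only [Fin.append_left, Fin.append_right] at hadd
  exact hadd

end Aux8

set_option maxHeartbeats 1000000 in
/-- `⊠ : A × B → A ⊠ B` is a universal `{0}`-lattice bimorphism: every
`{0}`-lattice bimorphism `f : A × B → C` factors uniquely through a
`{∨,0}`-homomorphism `g : A ⊠ B → C` (the join of `H, K ∈ A ⊠ B` being
`BoxCl (H ∪ K)` and its zero being `⊥ ⊠ ⊥`). -/
theorem stmt_15 {A B C : Type*} [Lattice A] [OrderBot A] [Lattice B] [OrderBot B]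
    [Lattice C] [OrderBot C] (f : A × B → C) (hf : IsZeroLatBimorphism f) :
    ∃ g : Set (A × B) → C,
      (∀ H ∈ LatTens A B, ∀ K ∈ LatTens A B, g (BoxCl (H ∪ K)) = g H ⊔ g K) ∧
      g (pureTens (⊥ : A) (⊥ : B)) = ⊥ ∧
      (∀ (a : A) (b : B), g (pureTens a b) = f (a, b)) ∧
      ∀ g' : Set (A × B) → C,
        (∀ H ∈ LatTens A B, ∀ K ∈ LatTens A B, g' (BoxCl (H ∪ K)) = g' H ⊔ g' K) →
        g' (pureTens (⊥ : A) (⊥ : B)) = ⊥ →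
        (∀ (a : A) (b : B), g' (pureTens a b) = f (a, b)) →
        ∀ H ∈ LatTens A B, g H = g' H := by
  classical
  have hpt : ∀ (a : A) (b : B), gVal f (pureTens a b) = f (a, b) := by
    intro a b
    have hrep : pureTens a b =
        ⋃ i : Fin (0 + 1), pureTens ((fun _ => a) i) ((fun _ => b) i) := by
      rw [Set.iUnion_const]
    rw [gVal_eq hf hrep]
    exact Finset.sup_const Finset.univ_nonempty (f (a, b))
  refine ⟨gVal f, fun H hH K hK => gVal_join hf hH hK, ?_, hpt, ?_⟩
  · rw [hpt ⊥ ⊥]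
    exact hf.2.1 ⊥
  · intro g' hjoin' hzero' hpt' H hH
    obtain ⟨m, c, d, hrep⟩ := exists_rep_of_mem_LatTens hH
    have hcl : H = BoxCl (⋃ i, pureTens (c i) (d i)) := by
      rw [← hrep, BoxCl_eq_self_of_mem_BoxProd hH.1]
    rw [gVal_eq hf hrep, hcl, g'_BoxCl_iUnion g' hjoin' hpt' m c d]
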